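/- Weight-perturbation stability of multi-headed attention: Let d, l, m ≥ 1 be integers and M, kappa ≥ 1, eta > 0. Let MHA_1(H) = sum_{j=1}^m A_j^1(H) and MHA_2(H) = sum_{j=1}^m A_j^2(H) be multi-headed attention layers whose corresponding attention heads A_j^1 and A_j^2 have parameter matrices in R^{d×d} with all entries bounded in absolute value by kappa and differing entrywise by at most eta (i.e. the query, key and value matrices of A_j^1 and A_j^2 differ by at most eta in each entry, for each j). Then for every H in R^{d×l} with ||H||_∞ ≤ M, ||MHA_1(H) − MHA_2(H)||_∞ ≤ 3·kappa^3·d^6·M^3·m·l·eta. -/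
import Mathlib


open Matrix Finset Real MeasureTheory

noncomputable section

/-- The ReLU activation function. -/
def relu (t : ℝ) : ℝ := max 0 t

/-- A ReLU attention head with query, key and value matrices `Q K V`, acting on an
embedding matrix `H ∈ ℝ^{de × l}`:  the `i`-th column of `A(H)` is
`∑ j σ(⟨Q h_i, K h_j⟩) V h_j`. -/
def attnHead {de l : ℕ} (Q K V : Matrix (Fin de) (Fin de) ℝ)
    (H : Matrix (Fin de) (Fin l) ℝ) : Matrix (Fin de) (Fin l) ℝ :=
  Matrix.of fun a i => ∑ j : Fin l,
    relu (∑ b : Fin de, Q.mulVec (fun c => H c i) b * K.mulVec (fun c => H c j) b) *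
      V.mulVec (fun c => H c j) a

/-- Multi-headed attention layer with `m` heads. -/
def mha {de l : ℕ} (m : ℕ) (Q K V : ℕ → Matrix (Fin de) (Fin de) ℝ)
    (H : Matrix (Fin de) (Fin l) ℝ) : Matrix (Fin de) (Fin l) ℝ :=
  ∑ j ∈ Finset.range m, attnHead (Q j) (K j) (V j) H

lemma sum_abs_le' {n : ℕ} (f : Fin n → ℝ) (C : ℝ) (h : ∀ b, |f b| ≤ C) :
    |∑ b, f b| ≤ n * C := by
  calc |∑ b, f b| ≤ ∑ b, |f b| := Finset.abs_sum_le_sum_abs _ _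
    _ ≤ ∑ _b : Fin n, C := Finset.sum_le_sum (fun b _ => h b)
    _ = n * C := by simp [mul_comm]

lemma mv_bound {d : ℕ} (Q : Matrix (Fin d) (Fin d) ℝ) (v : Fin d → ℝ) (κ M : ℝ)
    (hκ : 0 ≤ κ)
    (hQ : ∀ a b, |Q a b| ≤ κ) (hv : ∀ c, |v c| ≤ M) (b : Fin d) :
    |Q.mulVec v b| ≤ d * (κ * M) := by
  have : Q.mulVec v b = ∑ c, Q b c * v c := rfl
  rw [this]
  exact sum_abs_le' _ _ (fun c => by
    rw [abs_mul]; exact mul_le_mul (hQ b c) (hv c) (abs_nonneg _) hκ)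

lemma relu_lip (x y : ℝ) : |relu x - relu y| ≤ |x - y| := by
  unfold relu
  rw [max_comm 0 x, max_comm 0 y]
  exact abs_max_sub_max_le_abs x y 0

lemma abs_relu_le (x : ℝ) : |relu x| ≤ |x| := by
  simpa [relu] using relu_lip x 0

lemma term_stab {d : ℕ} (κ M η : ℝ) (hM : 1 ≤ M) (hκ : 1 ≤ κ) (hη : 0 ≤ η)
    (q1 k1 v1 q2 k2 v2 : Fin d → ℝ)
    (hq1 : ∀ b, |q1 b| ≤ (d : ℝ) * (κ * M)) (hk1 : ∀ b, |k1 b| ≤ (d : ℝ) * (κ * M))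
    (hq2 : ∀ b, |q2 b| ≤ (d : ℝ) * (κ * M)) (hk2 : ∀ b, |k2 b| ≤ (d : ℝ) * (κ * M))
    (hv1 : ∀ b, |v1 b| ≤ (d : ℝ) * (κ * M))
    (hdq : ∀ b, |q1 b - q2 b| ≤ (d : ℝ) * (η * M))
    (hdk : ∀ b, |k1 b - k2 b| ≤ (d : ℝ) * (η * M))
    (hdv : ∀ b, |v1 b - v2 b| ≤ (d : ℝ) * (η * M)) (a : Fin d) :
    |relu (∑ b, q1 b * k1 b) * v1 a - relu (∑ b, q2 b * k2 b) * v2 a|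
      ≤ 3 * (d : ℝ) ^ 4 * κ ^ 2 * M ^ 3 * η := by
  have hM0 : (0:ℝ) ≤ M := le_trans zero_le_one hM
  have hκ0 : (0:ℝ) ≤ κ := le_trans zero_le_one hκ
  have hd0 : (0:ℝ) ≤ (d : ℝ) := Nat.cast_nonneg d
  set s1 := ∑ b, q1 b * k1 b with hs1def
  set s2 := ∑ b, q2 b * k2 b with hs2def
  have hds : |s1 - s2| ≤ (d : ℝ) *
      ((d : ℝ) * (η * M) * ((d : ℝ) * (κ * M)) + (d : ℝ) * (κ * M) * ((d : ℝ) * (η * M))) := by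
    rw [hs1def, hs2def, ← Finset.sum_sub_distrib]
    apply sum_abs_le'
    intro b
    have h : q1 b * k1 b - q2 b * k2 b = (q1 b - q2 b) * k1 b + q2 b * (k1 b - k2 b) := by ring
    rw [h]
    refine (abs_add_le _ _).trans ?_
    rw [abs_mul, abs_mul]
    exact add_le_add
      (mul_le_mul (hdq b) (hk1 b) (abs_nonneg _) (by positivity))
      (mul_le_mul (hq2 b) (hdk b) (abs_nonneg _) (by positivity))
  have hs2b : |s2| ≤ (d : ℝ) * ((d : ℝ) * (κ * M) * ((d : ℝ) * (κ * M))) := by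
    rw [hs2def]
    apply sum_abs_le'
    intro b
    rw [abs_mul]
    exact mul_le_mul (hq2 b) (hk2 b) (abs_nonneg _) (by positivity)
  have key : relu s1 * v1 a - relu s2 * v2 a
      = (relu s1 - relu s2) * v1 a + relu s2 * (v1 a - v2 a) := by ring
  rw [key]
  refine (abs_add_le _ _).trans ?_
  rw [abs_mul, abs_mul]
  have h1 : |relu s1 - relu s2| ≤ (d : ℝ) *
      ((d : ℝ) * (η * M) * ((d : ℝ) * (κ * M)) + (d : ℝ) * (κ * M) * ((d : ℝ) * (η * M))) :=
    (relu_lip s1 s2).trans hds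
  have h2 : |relu s2| ≤ (d : ℝ) * ((d : ℝ) * (κ * M) * ((d : ℝ) * (κ * M))) :=
    (abs_relu_le s2).trans hs2b
  calc |relu s1 - relu s2| * |v1 a| + |relu s2| * |v1 a - v2 a|
      ≤ ((d : ℝ) * ((d : ℝ) * (η * M) * ((d : ℝ) * (κ * M)) +
            (d : ℝ) * (κ * M) * ((d : ℝ) * (η * M)))) * ((d : ℝ) * (κ * M)) +
          ((d : ℝ) * ((d : ℝ) * (κ * M) * ((d : ℝ) * (κ * M)))) * ((d : ℝ) * (η * M)) :=
        add_le_add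
          (mul_le_mul h1 (hv1 a) (abs_nonneg _) (by positivity))
          (mul_le_mul h2 (hdv a) (abs_nonneg _) (by positivity))
    _ = 3 * (d : ℝ) ^ 4 * κ ^ 2 * M ^ 3 * η := by ring

lemma head_stab {d l : ℕ} (κ M η : ℝ) (hM : 1 ≤ M) (hκ : 1 ≤ κ) (hη : 0 ≤ η)
    (Q₁ K₁ V₁ Q₂ K₂ V₂ : Matrix (Fin d) (Fin d) ℝ)
    (hQ₁ : ∀ a b, |Q₁ a b| ≤ κ) (hK₁ : ∀ a b, |K₁ a b| ≤ κ) (hV₁ : ∀ a b, |V₁ a b| ≤ κ)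
    (hQ₂ : ∀ a b, |Q₂ a b| ≤ κ) (hK₂ : ∀ a b, |K₂ a b| ≤ κ)
    (hdQ : ∀ a b, |Q₁ a b - Q₂ a b| ≤ η) (hdK : ∀ a b, |K₁ a b - K₂ a b| ≤ η)
    (hdV : ∀ a b, |V₁ a b - V₂ a b| ≤ η)
    (H : Matrix (Fin d) (Fin l) ℝ) (hH : ∀ a i, |H a i| ≤ M) (a : Fin d) (i : Fin l) :
    |attnHead Q₁ K₁ V₁ H a i - attnHead Q₂ K₂ V₂ H a i|
      ≤ l * (3 * (d : ℝ) ^ 4 * κ ^ 2 * M ^ 3 * η) := by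
  have hκ0 : (0:ℝ) ≤ κ := le_trans zero_le_one hκ
  have hη0 : (0:ℝ) ≤ η := hη
  simp only [attnHead, Matrix.of_apply]
  rw [← Finset.sum_sub_distrib]
  apply sum_abs_le'
  intro j
  have hdiff : ∀ (A B : Matrix (Fin d) (Fin d) ℝ), (∀ a b, |A a b - B a b| ≤ η) →
      ∀ (v : Fin d → ℝ), (∀ c, |v c| ≤ M) →
      ∀ b, |A.mulVec v b - B.mulVec v b| ≤ (d : ℝ) * (η * M) := by
    intro A B hAB v hv b
    have := mv_bound (A - B) v η M hη0 (fun a b => by simpa using hAB a b) hv b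
    rwa [Matrix.sub_mulVec, Pi.sub_apply] at this
  exact term_stab κ M η hM hκ hη0 _ _ _ _ _ _
    (mv_bound Q₁ _ κ M hκ0 hQ₁ (fun c => hH c i))
    (mv_bound K₁ _ κ M hκ0 hK₁ (fun c => hH c j))
    (mv_bound Q₂ _ κ M hκ0 hQ₂ (fun c => hH c i))
    (mv_bound K₂ _ κ M hκ0 hK₂ (fun c => hH c j))
    (mv_bound V₁ _ κ M hκ0 hV₁ (fun c => hH c j))
    (hdiff Q₁ Q₂ hdQ _ (fun c => hH c i))
    (hdiff K₁ K₂ hdK _ (fun c => hH c j))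
    (hdiff V₁ V₂ hdV _ (fun c => hH c j)) a

/-- Weight-perturbation stability of a multi-headed attention layer. -/
theorem mha_weight_stability
    (d l m : ℕ) (hd : 1 ≤ d) (hl : 1 ≤ l) (hm : 1 ≤ m) (M κ η : ℝ)
    (hM : 1 ≤ M) (hκ : 1 ≤ κ) (hη : 0 < η)
    (Q₁ K₁ V₁ Q₂ K₂ V₂ : ℕ → Matrix (Fin d) (Fin d) ℝ)
    (hQ₁ : ∀ j < m, ∀ a b, |Q₁ j a b| ≤ κ) (hK₁ : ∀ j < m, ∀ a b, |K₁ j a b| ≤ κ)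
    (hV₁ : ∀ j < m, ∀ a b, |V₁ j a b| ≤ κ)
    (hQ₂ : ∀ j < m, ∀ a b, |Q₂ j a b| ≤ κ) (hK₂ : ∀ j < m, ∀ a b, |K₂ j a b| ≤ κ)
    (hV₂ : ∀ j < m, ∀ a b, |V₂ j a b| ≤ κ)
    (hdQ : ∀ j < m, ∀ a b, |Q₁ j a b - Q₂ j a b| ≤ η)
    (hdK : ∀ j < m, ∀ a b, |K₁ j a b - K₂ j a b| ≤ η)
    (hdV : ∀ j < m, ∀ a b, |V₁ j a b - V₂ j a b| ≤ η)
    (H : Matrix (Fin d) (Fin l) ℝ) (hH : ∀ a i, |H a i| ≤ M) :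
    ∀ a i, |mha m Q₁ K₁ V₁ H a i - mha m Q₂ K₂ V₂ H a i| ≤
      3 * κ ^ 3 * (d : ℝ) ^ 6 * M ^ 3 * m * l * η := by
  intro a i
  have hM0 : (0:ℝ) ≤ M := le_trans zero_le_one hM
  have hκ0 : (0:ℝ) ≤ κ := le_trans zero_le_one hκ
  have hd1 : (1:ℝ) ≤ (d : ℝ) := by exact_mod_cast hd
  have key : |mha m Q₁ K₁ V₁ H a i - mha m Q₂ K₂ V₂ H a i|
      ≤ m * ((l : ℝ) * (3 * (d : ℝ) ^ 4 * κ ^ 2 * M ^ 3 * η)) := by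
    simp only [mha, Finset.sum_apply, Matrix.sum_apply]
    rw [← Finset.sum_sub_distrib]
    calc |∑ j ∈ Finset.range m, (attnHead (Q₁ j) (K₁ j) (V₁ j) H a i
              - attnHead (Q₂ j) (K₂ j) (V₂ j) H a i)|
        ≤ ∑ j ∈ Finset.range m, |attnHead (Q₁ j) (K₁ j) (V₁ j) H a i
              - attnHead (Q₂ j) (K₂ j) (V₂ j) H a i| := Finset.abs_sum_le_sum_abs _ _
      _ ≤ ∑ _j ∈ Finset.range m, (l : ℝ) * (3 * (d : ℝ) ^ 4 * κ ^ 2 * M ^ 3 * η) := by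
          refine Finset.sum_le_sum (fun j hj => ?_)
          have hjm := Finset.mem_range.mp hj
          exact head_stab κ M η hM hκ hη.le _ _ _ _ _ _
            (hQ₁ j hjm) (hK₁ j hjm) (hV₁ j hjm) (hQ₂ j hjm) (hK₂ j hjm)
            (hdQ j hjm) (hdK j hjm) (hdV j hjm) H hH a i
      _ = m * ((l : ℝ) * (3 * (d : ℝ) ^ 4 * κ ^ 2 * M ^ 3 * η)) := by
          simp [mul_comm]
  refine key.trans ?_
  have hfac : κ ^ 2 * (d : ℝ) ^ 4 ≤ κ ^ 3 * (d : ℝ) ^ 6 :=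
    mul_le_mul (pow_le_pow_right₀ hκ (by norm_num)) (pow_le_pow_right₀ hd1 (by norm_num))
      (by positivity) (by positivity)
  have hml : (0:ℝ) ≤ (m : ℝ) * (l : ℝ) := by positivity
  nlinarith [mul_le_mul_of_nonneg_right (mul_le_mul_of_nonneg_right hfac hml)
      (by positivity : (0:ℝ) ≤ 3 * M ^ 3 * η)]

end
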